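/- Let 𝓦 be the set of matrices W ∈ [A]^{n×K} with nonempty best-response region R(W), and suppose T ≥ |𝓦|. For each W ∈ 𝓦, let a^{W,1}, ..., a^{W,T} be i.i.d. samples from the distribution P(· | R(W)) on [A]^n, drawn independently across regions, and let Û_N(x, R(W)) = (1/N)·Σ_{s=1}^N u(x, a^{W,s}). Then with probability at least 1 − 1/T², simultaneously for all W ∈ 𝓦, all N ∈ {1, ..., T}, and all x ∈ R(W): |U(x, R(W)) − Û_N(x, R(W))| ≤ sqrt(4(L+1)·log(3T)/N). -/

import Mathlib

open Finset

noncomputable section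

/-- Leader's expected utility of mixed strategy `x` against joint follower action `a`:
`u(x, a) = ∑ ℓ, x ℓ * u ℓ a`. -/
def leaderU {n L A : ℕ} (u : Fin L → (Fin n → Fin A) → ℝ)
    (x : Fin L → ℝ) (a : Fin n → Fin A) : ℝ :=
  ∑ ℓ, x ℓ * u ℓ a

/-- Follower's expected utility of playing `a` under leader mixed strategy `x` when the
follower has type `k`: `v(x, a, k) = ∑ ℓ, x ℓ * v ℓ a k`. -/
def followerU {L A K : ℕ} (v : Fin L → Fin A → Fin K → ℝ)
    (x : Fin L → ℝ) (a : Fin A) (k : Fin K) : ℝ :=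
  ∑ ℓ, x ℓ * v ℓ a k

/-- `br` is a joint best-response function: each coordinate maximizes the corresponding
follower's expected utility, and among coordinatewise maximizers the leader's expected
utility is maximized (ties broken in favor of the leader). -/
def IsBR {n L A K : ℕ} (u : Fin L → (Fin n → Fin A) → ℝ)
    (v : Fin n → Fin L → Fin A → Fin K → ℝ)
    (br : (Fin n → Fin K) → (Fin L → ℝ) → (Fin n → Fin A)) : Prop :=
  ∀ (θ : Fin n → Fin K) (x : Fin L → ℝ),
    (∀ (i : Fin n) (a : Fin A),
        followerU (v i) x a (θ i) ≤ followerU (v i) x (br θ x i) (θ i)) ∧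
    (∀ b : Fin n → Fin A,
        (∀ (i : Fin n) (a : Fin A),
            followerU (v i) x a (θ i) ≤ followerU (v i) x (b i) (θ i)) →
        leaderU u x b ≤ leaderU u x (br θ x))

/-- Leader's expected utility `U_D(x) = E_{θ ∼ D}[u(x, br(θ, x))]`. -/
def UD {n L A K : ℕ} (D : (Fin n → Fin K) → ℝ)
    (u : Fin L → (Fin n → Fin A) → ℝ)
    (br : (Fin n → Fin K) → (Fin L → ℝ) → (Fin n → Fin A))
    (x : Fin L → ℝ) : ℝ :=
  ∑ θ, D θ * leaderU u x (br θ x)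

/-- `D` is a probability distribution on the finite type `α`. -/
def IsDist {α : Type*} [Fintype α] (D : α → ℝ) : Prop :=
  (∀ a, 0 ≤ D a) ∧ ∑ a, D a = 1

/-- The best-response region `R(W)`: leader strategies under which the followers'
joint best response agrees with the matrix `W`. -/
def BRregion {n L A K : ℕ}
    (br : (Fin n → Fin K) → (Fin L → ℝ) → (Fin n → Fin A))
    (W : Fin n → Fin K → Fin A) : Set (Fin L → ℝ) :=
  {x | x ∈ stdSimplex ℝ (Fin L) ∧ ∀ θ : Fin n → Fin K, br θ x = fun i => W i (θ i)}

/-- The optimal leader utility `sup_{x ∈ Δ([L])} U_D(x)`. -/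
def optUD {n L A K : ℕ} (D : (Fin n → Fin K) → ℝ)
    (u : Fin L → (Fin n → Fin A) → ℝ)
    (br : (Fin n → Fin K) → (Fin L → ℝ) → (Fin n → Fin A)) : ℝ :=
  sSup (UD D u br '' stdSimplex ℝ (Fin L))

/-- The joint-action distribution induced by region `R(W)`:
`P(a | R(W)) = ∑_{θ : W(θ) = a} D(θ)`. -/
def Pact {n A K : ℕ} (D : (Fin n → Fin K) → ℝ) (W : Fin n → Fin K → Fin A)
    (a : Fin n → Fin A) : ℝ :=
  ∑ θ : Fin n → Fin K, if (fun i => W i (θ i)) = a then D θ else 0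

/-- The expected utility of playing `x` inside region `R(W)`:
`U(x, R(W)) = ∑_a P(a | R(W))·u(x, a)`. -/
def UReg {n L A K : ℕ} (D : (Fin n → Fin K) → ℝ)
    (u : Fin L → (Fin n → Fin A) → ℝ) (W : Fin n → Fin K → Fin A)
    (x : Fin L → ℝ) : ℝ :=
  ∑ a : Fin n → Fin A, Pact D W a * leaderU u x a


-- ===== Auxiliary lemmas =====

section Aux

variable {α : Type*} [Fintype α]

lemma exp_le_cosh_add (t z : ℝ) (hz : z ∈ Set.Icc (-1 : ℝ) 1) :
    Real.exp (t * z) ≤ Real.cosh t + z * Real.sinh t := by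
  obtain ⟨h1, h2⟩ := hz
  have := convexOn_exp.2 (Set.mem_univ (-t)) (Set.mem_univ t)
    (by linarith : (0:ℝ) ≤ (1 - z)/2) (by linarith : (0:ℝ) ≤ (1 + z)/2) (by ring)
  simp only [smul_eq_mul] at this
  have harg : (1 - z)/2 * (-t) + (1 + z)/2 * t = t * z := by ring
  rw [harg] at this
  calc Real.exp (t * z) ≤ (1 - z)/2 * Real.exp (-t) + (1 + z)/2 * Real.exp t := this
    _ = Real.cosh t + z * Real.sinh t := by rw [Real.cosh_eq, Real.sinh_eq]; ring

lemma mgf_le (q : α → ℝ) (hq0 : ∀ a, 0 ≤ q a) (hq1 : ∑ a, q a = 1)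
    (g : α → ℝ) (hg : ∀ a, g a ∈ Set.Icc (0 : ℝ) 1) (t : ℝ) :
    ∑ a, q a * Real.exp (t * (g a - ∑ b, q b * g b)) ≤ Real.exp (t ^ 2 / 2) := by
  set μ := ∑ b, q b * g b with hμ
  have hμ0 : 0 ≤ μ := Finset.sum_nonneg fun b _ => mul_nonneg (hq0 b) (hg b).1
  have hμ1 : μ ≤ 1 := by
    calc μ ≤ ∑ b, q b * 1 := Finset.sum_le_sum fun b _ =>
          mul_le_mul_of_nonneg_left (hg b).2 (hq0 b)
      _ = 1 := by simp [hq1]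
  have h0 : ∑ a, q a * (g a - μ) = 0 := by
    simp only [mul_sub, Finset.sum_sub_distrib, ← hμ, ← Finset.sum_mul, hq1, one_mul, sub_self]
  calc ∑ a, q a * Real.exp (t * (g a - μ))
      ≤ ∑ a, q a * (Real.cosh t + (g a - μ) * Real.sinh t) :=
        Finset.sum_le_sum fun a _ => mul_le_mul_of_nonneg_left
          (exp_le_cosh_add t _ ⟨by have := (hg a).1; linarith, by have := (hg a).2; linarith⟩)
          (hq0 a)
    _ = (∑ a, q a) * Real.cosh t + (∑ a, q a * (g a - μ)) * Real.sinh t := by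
        rw [Finset.sum_mul, Finset.sum_mul, ← Finset.sum_add_distrib]
        exact Finset.sum_congr rfl fun a _ => by ring
    _ = Real.cosh t := by rw [hq1, h0]; ring
    _ ≤ Real.exp (t ^ 2 / 2) := Real.cosh_le_exp_half_sq t

lemma sum_fn_prod {ι κ : Type*} [Fintype ι] [Fintype κ] [DecidableEq ι] (f : ι → κ → ℝ) :
    ∑ ω : ι → κ, ∏ i, f i (ω i) = ∏ i, ∑ k, f i k := by
  rw [Finset.prod_univ_sum, Fintype.piFinset_univ]

lemma card_filter_lt (T N : ℕ) (h : N ≤ T) :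
    ((univ : Finset (Fin T)).filter (fun s : Fin T => (s : ℕ) < N)).card = N := by
  have : (univ : Finset (Fin T)).filter (fun s : Fin T => (s : ℕ) < N) =
      (Finset.range N).attachFin (fun m hm => lt_of_lt_of_le (Finset.mem_range.mp hm) h) := by
    ext a; simp [Finset.mem_attachFin]
  rw [this, Finset.card_attachFin, Finset.card_range]

open Classical in
lemma chernoff_one (T N : ℕ) (hNT : N ≤ T)
    (q : α → ℝ) (hq0 : ∀ a, 0 ≤ q a) (hq1 : ∑ a, q a = 1)
    (g : α → ℝ) (hg : ∀ a, g a ∈ Set.Icc (0 : ℝ) 1) (ε : ℝ) (hε : 0 ≤ ε) :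
    ∑ c : Fin T → α, (∏ s, q (c s)) *
      (if (N : ℝ) * ε ≤ ∑ s : Fin T,
          (if (s : ℕ) < N then g (c s) - ∑ b, q b * g b else 0) then (1:ℝ) else 0)
      ≤ Real.exp (-((N : ℝ) * ε ^ 2 / 2)) := by
  set μ := ∑ b, q b * g b with hμ
  set S : (Fin T → α) → ℝ := fun c => ∑ s : Fin T, (if (s : ℕ) < N then g (c s) - μ else 0)
    with hS
  have step1 : ∀ c : Fin T → α,
      (∏ s, q (c s)) * (if (N : ℝ) * ε ≤ S c then (1:ℝ) else 0)
        ≤ (∏ s, q (c s)) * (Real.exp (ε * S c) * Real.exp (-(ε * ((N:ℝ) * ε)))) := by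
    intro c
    apply mul_le_mul_of_nonneg_left _ (Finset.prod_nonneg fun s _ => hq0 _)
    rw [← Real.exp_add]
    by_cases h : (N : ℝ) * ε ≤ S c
    · simp only [h, if_true]
      apply Real.one_le_exp
      nlinarith
    · simp only [h, if_false]
      positivity
  have step2 : ∑ c : Fin T → α, (∏ s, q (c s)) * Real.exp (ε * S c)
      = ∏ s : Fin T, ∑ a, q a * Real.exp (ε * (if (s : ℕ) < N then g a - μ else 0)) := by
    rw [← sum_fn_prod (fun (s : Fin T) (a : α) => q a * Real.exp (ε * (if (s : ℕ) < N then g a - μ else 0)))]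
    apply Finset.sum_congr rfl
    intro c _
    rw [hS]
    simp only []
    rw [Finset.mul_sum, Real.exp_sum, ← Finset.prod_mul_distrib]
  have step3 : ∏ s : Fin T, ∑ a, q a * Real.exp (ε * (if (s : ℕ) < N then g a - μ else 0))
      ≤ Real.exp (ε ^ 2 / 2) ^ N := by
    calc ∏ s : Fin T, ∑ a, q a * Real.exp (ε * (if (s : ℕ) < N then g a - μ else 0))
        ≤ ∏ s : Fin T, (if (s : ℕ) < N then Real.exp (ε ^ 2 / 2) else 1) := by
          apply Finset.prod_le_prod
          · intro s _
            exact Finset.sum_nonneg fun a _ => mul_nonneg (hq0 a) (Real.exp_nonneg _)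
          · intro s _
            by_cases h : (s : ℕ) < N
            · simp only [h, if_true]
              exact mgf_le q hq0 hq1 g hg ε
            · simp only [h, if_false]
              simp [mul_zero, Real.exp_zero, hq1]
      _ = Real.exp (ε ^ 2 / 2) ^ N := by
          rw [Finset.prod_ite, Finset.prod_const, Finset.prod_const, one_pow, mul_one,
            card_filter_lt T N hNT]
  calc ∑ c : Fin T → α, (∏ s, q (c s)) *
        (if (N : ℝ) * ε ≤ S c then (1:ℝ) else 0)
      ≤ ∑ c : Fin T → α, (∏ s, q (c s)) *
        (Real.exp (ε * S c) * Real.exp (-(ε * ((N:ℝ) * ε)))) :=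
        Finset.sum_le_sum fun c _ => step1 c
    _ = (∑ c : Fin T → α, (∏ s, q (c s)) * Real.exp (ε * S c)) *
          Real.exp (-(ε * ((N:ℝ) * ε))) := by
        rw [Finset.sum_mul]
        exact Finset.sum_congr rfl fun c _ => by ring
    _ ≤ Real.exp (ε ^ 2 / 2) ^ N * Real.exp (-(ε * ((N:ℝ) * ε))) := by
        apply mul_le_mul_of_nonneg_right _ (Real.exp_nonneg _)
        rw [step2]; exact step3
    _ = Real.exp (-((N : ℝ) * ε ^ 2 / 2)) := by
        rw [← Real.exp_nat_mul, ← Real.exp_add]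
        congr 1
        ring

open Classical in
lemma chernoff_abs (T N : ℕ) (hNT : N ≤ T)
    (q : α → ℝ) (hq0 : ∀ a, 0 ≤ q a) (hq1 : ∑ a, q a = 1)
    (g : α → ℝ) (hg : ∀ a, g a ∈ Set.Icc (0 : ℝ) 1) (ε : ℝ) (hε : 0 ≤ ε) :
    ∑ c : Fin T → α, (∏ s, q (c s)) *
      (if (N : ℝ) * ε < |∑ s : Fin T,
          (if (s : ℕ) < N then g (c s) - ∑ b, q b * g b else 0)| then (1:ℝ) else 0)
      ≤ 2 * Real.exp (-((N : ℝ) * ε ^ 2 / 2)) := by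
  set μ := ∑ b, q b * g b with hμ
  set S : (Fin T → α) → ℝ := fun c => ∑ s : Fin T, (if (s : ℕ) < N then g (c s) - μ else 0)
    with hS
  have hμ' : ∑ b, q b * (1 - g b) = 1 - μ := by
    simp only [mul_sub, Finset.sum_sub_distrib, mul_one, hq1, hμ]
  have hSneg : ∀ c : Fin T → α,
      (∑ s : Fin T, (if (s : ℕ) < N then (1 - g (c s)) - (1 - μ) else 0)) = - S c := by
    intro c
    rw [hS, ← Finset.sum_neg_distrib]
    apply Finset.sum_congr rfl
    intro s _
    split_ifs <;> ring
  have h1 := chernoff_one T N hNT q hq0 hq1 g hg ε hε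
  have h2 := chernoff_one T N hNT q hq0 hq1 (fun a => 1 - g a)
    (fun a => ⟨by show (0:ℝ) ≤ 1 - g a; have := (hg a).2; linarith,
      by show (1:ℝ) - g a ≤ 1; have := (hg a).1; linarith⟩) ε hε
  simp only [hμ'] at h2
  have h2' : ∑ c : Fin T → α, (∏ s, q (c s)) *
      (if (N : ℝ) * ε ≤ - S c then (1:ℝ) else 0) ≤ Real.exp (-((N : ℝ) * ε ^ 2 / 2)) := by
    calc ∑ c : Fin T → α, (∏ s, q (c s)) * (if (N : ℝ) * ε ≤ - S c then (1:ℝ) else 0)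
        = ∑ c : Fin T → α, (∏ s, q (c s)) *
            (if (N : ℝ) * ε ≤ ∑ s : Fin T,
              (if (s : ℕ) < N then (1 - g (c s)) - (1 - μ) else 0) then (1:ℝ) else 0) := by
          apply Finset.sum_congr rfl
          intro c _
          rw [hSneg c]
      _ ≤ Real.exp (-((N : ℝ) * ε ^ 2 / 2)) := h2
  have pointwise : ∀ c : Fin T → α,
      (∏ s, q (c s)) * (if (N : ℝ) * ε < |S c| then (1:ℝ) else 0)
        ≤ (∏ s, q (c s)) * (if (N : ℝ) * ε ≤ S c then (1:ℝ) else 0)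
          + (∏ s, q (c s)) * (if (N : ℝ) * ε ≤ - S c then (1:ℝ) else 0) := by
    intro c
    have hp : (0:ℝ) ≤ ∏ s, q (c s) := Finset.prod_nonneg fun s _ => hq0 _
    rw [← mul_add]
    apply mul_le_mul_of_nonneg_left _ hp
    by_cases h : (N : ℝ) * ε < |S c|
    · simp only [h, if_true]
      rcases abs_cases (S c) with ⟨he, _⟩ | ⟨he, _⟩
      · rw [if_pos (by linarith)]
        have : (0:ℝ) ≤ if (N : ℝ) * ε ≤ - S c then (1:ℝ) else 0 := by positivity
        linarith
      · rw [if_pos (by linarith : (N : ℝ) * ε ≤ - S c)]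
        have : (0:ℝ) ≤ if (N : ℝ) * ε ≤ S c then (1:ℝ) else 0 := by positivity
        linarith
    · simp only [h, if_false]
      positivity
  calc ∑ c : Fin T → α, (∏ s, q (c s)) * (if (N : ℝ) * ε < |S c| then (1:ℝ) else 0)
      ≤ ∑ c : Fin T → α, ((∏ s, q (c s)) * (if (N : ℝ) * ε ≤ S c then (1:ℝ) else 0)
          + (∏ s, q (c s)) * (if (N : ℝ) * ε ≤ - S c then (1:ℝ) else 0)) :=
        Finset.sum_le_sum fun c _ => pointwise c
    _ = (∑ c : Fin T → α, (∏ s, q (c s)) * (if (N : ℝ) * ε ≤ S c then (1:ℝ) else 0))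
        + ∑ c : Fin T → α, (∏ s, q (c s)) * (if (N : ℝ) * ε ≤ - S c then (1:ℝ) else 0) :=
        Finset.sum_add_distrib
    _ ≤ Real.exp (-((N : ℝ) * ε ^ 2 / 2)) + Real.exp (-((N : ℝ) * ε ^ 2 / 2)) :=
        add_le_add h1 h2'
    _ = 2 * Real.exp (-((N : ℝ) * ε ^ 2 / 2)) := by ring

open Classical in
lemma marginal {M : Type*} [Fintype M] [DecidableEq M] {T : ℕ}
    (Q : M → α → ℝ) (hQ1 : ∀ W, ∑ a, Q W a = 1) (W₀ : M) (F : (Fin T → α) → ℝ) :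
    ∑ ω : M → Fin T → α, (∏ W, ∏ s, Q W (ω W s)) * F (ω W₀)
      = ∑ c : Fin T → α, (∏ s, Q W₀ (c s)) * F c := by
  have key : ∀ ω : M → Fin T → α, (∏ W, ∏ s, Q W (ω W s)) * F (ω W₀)
      = ∏ W, ((∏ s, Q W (ω W s)) * (if W = W₀ then F (ω W) else 1)) := by
    intro ω
    rw [Finset.prod_mul_distrib, Finset.prod_ite_eq' univ W₀ (fun W => F (ω W))]
    simp
  simp only [key]
  rw [sum_fn_prod (fun (W : M) (c : Fin T → α) => (∏ s, Q W (c s)) * (if W = W₀ then F c else 1))]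
  rw [Finset.prod_eq_single W₀]
  · simp
  · intro W _ hW
    simp only [hW, if_false, mul_one]
    rw [sum_fn_prod (fun (_ : Fin T) (a : α) => Q W a)]
    simp [hQ1]
  · intro h
    exact absurd (Finset.mem_univ W₀) h

end Aux

section Aux2

variable {n A K : ℕ}

lemma Pact_nonneg (D : (Fin n → Fin K) → ℝ) (hD : IsDist D)
    (W : Fin n → Fin K → Fin A) (a : Fin n → Fin A) : 0 ≤ Pact D W a := by
  apply Finset.sum_nonneg
  intro θ _
  split_ifs
  · exact hD.1 θ
  · exact le_refl 0

lemma Pact_sum (D : (Fin n → Fin K) → ℝ) (hD : IsDist D)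
    (W : Fin n → Fin K → Fin A) : ∑ a, Pact D W a = 1 := by
  simp only [Pact]
  rw [Finset.sum_comm]
  have : ∀ θ : Fin n → Fin K,
      ∑ a : Fin n → Fin A, (if (fun i => W i (θ i)) = a then D θ else 0) = D θ := by
    intro θ
    rw [Finset.sum_ite_eq]
    simp
  simp only [this]
  exact hD.2

lemma UReg_eq {L : ℕ} (D : (Fin n → Fin K) → ℝ) (u : Fin L → (Fin n → Fin A) → ℝ)
    (W : Fin n → Fin K → Fin A) (x : Fin L → ℝ) :
    UReg D u W x = ∑ ℓ, x ℓ * ∑ b, Pact D W b * u ℓ b := by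
  simp only [UReg, leaderU]
  calc ∑ a, Pact D W a * ∑ ℓ, x ℓ * u ℓ a
      = ∑ a, ∑ ℓ, x ℓ * (Pact D W a * u ℓ a) := by
        apply Finset.sum_congr rfl
        intro a _
        rw [Finset.mul_sum]
        exact Finset.sum_congr rfl fun ℓ _ => by ring
    _ = ∑ ℓ, ∑ a, x ℓ * (Pact D W a * u ℓ a) := Finset.sum_comm
    _ = ∑ ℓ, x ℓ * ∑ b, Pact D W b * u ℓ b := by
        exact Finset.sum_congr rfl fun ℓ _ => (Finset.mul_sum _ _ _).symm

lemma emp_eq {L T : ℕ} (u : Fin L → (Fin n → Fin A) → ℝ) (x : Fin L → ℝ)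
    (c : Fin T → (Fin n → Fin A)) (N : ℕ) :
    (1 / (N : ℝ)) * ∑ s : Fin T, (if (s : ℕ) < N then leaderU u x (c s) else 0)
      = ∑ ℓ, x ℓ * ((1 / (N : ℝ)) * ∑ s : Fin T, (if (s : ℕ) < N then u ℓ (c s) else 0)) := by
  have h1 : ∀ s : Fin T, (if (s : ℕ) < N then leaderU u x (c s) else 0)
      = ∑ ℓ, (if (s : ℕ) < N then x ℓ * u ℓ (c s) else 0) := by
    intro s
    split_ifs
    · rfl
    · simp
  simp only [h1]
  rw [Finset.sum_comm, Finset.mul_sum]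
  apply Finset.sum_congr rfl
  intro ℓ _
  have h2 : ∀ s : Fin T, (if (s : ℕ) < N then x ℓ * u ℓ (c s) else 0)
      = x ℓ * (if (s : ℕ) < N then u ℓ (c s) else 0) := by
    intro s; split_ifs <;> ring
  simp only [h2, ← Finset.mul_sum]
  ring

lemma sum_center {T : ℕ} (N : ℕ) (hNT : N ≤ T) (f : Fin T → ℝ) (μ : ℝ) :
    (∑ s : Fin T, (if (s : ℕ) < N then f s - μ else 0))
      = (∑ s : Fin T, (if (s : ℕ) < N then f s else 0)) - (N : ℝ) * μ := by
  have h1 : ∀ s : Fin T, (if (s : ℕ) < N then f s - μ else 0)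
      = (if (s : ℕ) < N then f s else 0) - (if (s : ℕ) < N then μ else 0) := by
    intro s; split_ifs <;> ring
  simp only [h1]
  rw [Finset.sum_sub_distrib]
  congr 1
  rw [Finset.sum_ite, Finset.sum_const, Finset.sum_const_zero, add_zero,
    card_filter_lt T N hNT, nsmul_eq_mul]

lemma key_extract {L T : ℕ} (D : (Fin n → Fin K) → ℝ) (u : Fin L → (Fin n → Fin A) → ℝ)
    (W : Fin n → Fin K → Fin A) (c : Fin T → (Fin n → Fin A)) (N : ℕ) (hN1 : 1 ≤ N)
    (hNT : N ≤ T) (x : Fin L → ℝ) (hx0 : ∀ ℓ, 0 ≤ x ℓ) (hx1 : ∑ ℓ, x ℓ = 1) (ε : ℝ)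
    (hgt : ε < |UReg D u W x -
      (1 / (N : ℝ)) * ∑ s : Fin T, (if (s : ℕ) < N then leaderU u x (c s) else 0)|) :
    ∃ ℓ : Fin L, (N : ℝ) * ε <
      |∑ s : Fin T, (if (s : ℕ) < N then u ℓ (c s) - ∑ b, Pact D W b * u ℓ b else 0)| := by
  by_contra hcon
  push_neg at hcon
  have hNpos : (0 : ℝ) < N := by exact_mod_cast hN1
  have hml : ∀ ℓ, |(∑ b, Pact D W b * u ℓ b) -
      (1 / (N : ℝ)) * ∑ s : Fin T, (if (s : ℕ) < N then u ℓ (c s) else 0)| ≤ ε := by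
    intro ℓ
    have h := hcon ℓ
    rw [sum_center N hNT (fun s => u ℓ (c s)) _] at h
    have h3 : ∑ s : Fin T, (if (s : ℕ) < N then u ℓ (c s) else 0)
        = (N : ℝ) * ((1 / (N : ℝ)) * ∑ s : Fin T, (if (s : ℕ) < N then u ℓ (c s) else 0)) := by
      field_simp
    rw [h3] at h
    rw [show (N : ℝ) * ((1 / (N : ℝ)) * ∑ s : Fin T, (if (s : ℕ) < N then u ℓ (c s) else 0))
          - (N : ℝ) * (∑ b, Pact D W b * u ℓ b)
        = (N : ℝ) * (((1 / (N : ℝ)) * ∑ s : Fin T, (if (s : ℕ) < N then u ℓ (c s) else 0))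
          - (∑ b, Pact D W b * u ℓ b)) from by ring, abs_mul, abs_of_pos hNpos,
      abs_sub_comm] at h
    exact le_of_mul_le_mul_left h hNpos
  have hb : |UReg D u W x -
      (1 / (N : ℝ)) * ∑ s : Fin T, (if (s : ℕ) < N then leaderU u x (c s) else 0)| ≤ ε := by
    rw [UReg_eq, emp_eq, ← Finset.sum_sub_distrib]
    calc |∑ ℓ, (x ℓ * (∑ b, Pact D W b * u ℓ b) -
            x ℓ * ((1 / (N : ℝ)) * ∑ s : Fin T, (if (s : ℕ) < N then u ℓ (c s) else 0)))|
        ≤ ∑ ℓ, |x ℓ * (∑ b, Pact D W b * u ℓ b) -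
            x ℓ * ((1 / (N : ℝ)) * ∑ s : Fin T, (if (s : ℕ) < N then u ℓ (c s) else 0))| :=
          Finset.abs_sum_le_sum_abs _ _
      _ = ∑ ℓ, x ℓ * |(∑ b, Pact D W b * u ℓ b) -
            (1 / (N : ℝ)) * ∑ s : Fin T, (if (s : ℕ) < N then u ℓ (c s) else 0)| :=
          Finset.sum_congr rfl fun ℓ _ => by
            rw [← mul_sub, abs_mul, abs_of_nonneg (hx0 ℓ)]
      _ ≤ ∑ ℓ, x ℓ * ε :=
          Finset.sum_le_sum fun ℓ _ => mul_le_mul_of_nonneg_left (hml ℓ) (hx0 ℓ)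
      _ = ε := by rw [← Finset.sum_mul, hx1, one_mul]
  exact absurd hb (not_le.mpr hgt)

lemma numeric (L T : ℕ) (hL : 2 ≤ L) (hT : 1 ≤ T) :
    (T : ℝ) * ((T : ℝ) * ((L : ℝ) *
        (2 * Real.exp (-(2 * ((L : ℝ) + 1) * Real.log (3 * (T : ℝ))))))) ≤ 1 / (T : ℝ) ^ 2 := by
  have hT1 : (1 : ℝ) ≤ (T : ℝ) := by exact_mod_cast hT
  have hTpos : (0 : ℝ) < (T : ℝ) := by linarith
  have h3T : (0 : ℝ) < 3 * (T : ℝ) := by linarith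
  have hexp : Real.exp (-(2 * ((L : ℝ) + 1) * Real.log (3 * (T : ℝ))))
      = ((3 * (T : ℝ)) ^ (2 * L + 2))⁻¹ := by
    rw [← Real.exp_log h3T, ← Real.exp_nat_mul, ← Real.exp_neg]
    congr 1
    rw [Real.log_exp]
    push_cast
    ring
  rw [hexp]
  have h2L3 : 2 * L ≤ 3 ^ (2 * L + 2) := by
    calc 2 * L ≤ 2 * 3 ^ L := Nat.mul_le_mul_left 2 (Nat.le_of_lt (Nat.lt_pow_self (by norm_num : 1 < 3) : L < 3 ^ L))
      _ ≤ 3 * 3 ^ L := Nat.mul_le_mul_right _ (by norm_num)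
      _ = 3 ^ (L + 1) := by rw [pow_succ, Nat.mul_comm]
      _ ≤ 3 ^ (2 * L + 2) := Nat.pow_le_pow_right (by norm_num) (by omega)
  have hpow : 2 * (L : ℝ) * (T : ℝ) ^ 2 * (T : ℝ) ^ 2 ≤ (3 * (T : ℝ)) ^ (2 * L + 2) := by
    have h1 : (2 * (L : ℝ)) ≤ (3 : ℝ) ^ (2 * L + 2) := by
      have := (Nat.cast_le (α := ℝ)).mpr h2L3
      push_cast at this
      convert this using 2 <;> norm_num
    have h2 : (T : ℝ) ^ 4 ≤ (T : ℝ) ^ (2 * L + 2) := pow_le_pow_right₀ hT1 (by omega)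
    have h4 : (0 : ℝ) ≤ (T : ℝ) ^ 4 := by positivity
    calc 2 * (L : ℝ) * (T : ℝ) ^ 2 * (T : ℝ) ^ 2 = (2 * (L : ℝ)) * (T : ℝ) ^ 4 := by ring
      _ ≤ (3 : ℝ) ^ (2 * L + 2) * (T : ℝ) ^ (2 * L + 2) := by
          apply mul_le_mul h1 h2 h4 (by positivity)
      _ = (3 * (T : ℝ)) ^ (2 * L + 2) := (mul_pow _ _ _).symm
  have hXpos : (0 : ℝ) < (3 * (T : ℝ)) ^ (2 * L + 2) := by positivity
  have heq : (T : ℝ) * ((T : ℝ) * ((L : ℝ) * (2 * ((3 * (T : ℝ)) ^ (2 * L + 2))⁻¹)))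
      = (2 * (L : ℝ) * (T : ℝ) ^ 2) / ((3 * (T : ℝ)) ^ (2 * L + 2)) := by
    field_simp
  rw [heq, div_le_div_iff₀ hXpos (by positivity : (0:ℝ) < (T : ℝ) ^ 2)]
  nlinarith [hpow]

end Aux2

/- **Statement 14.** Let `𝓦` be the set of matrices with nonempty best-response region and
suppose `T ≥ |𝓦|`. Draw, for each `W` and each `s < T`, an i.i.d. sample `a^{W,s}` from
`P(· | R(W))` (independently across regions). Then with probability at least `1 − 1/T²`,
simultaneously for all `W ∈ 𝓦`, all `N ∈ {1, …, T}` and all `x ∈ R(W)`,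
`|U(x, R(W)) − (1/N)·∑_{s<N} u(x, a^{W,s})| ≤ √(4(L+1)·log(3T)/N)`. -/
open Classical in
theorem stmt14 (n L A K T : ℕ) (hn : 1 ≤ n) (hL : 2 ≤ L) (hT : 1 ≤ T)
    (D : (Fin n → Fin K) → ℝ) (hD : IsDist D)
    (u : Fin L → (Fin n → Fin A) → ℝ) (hu : ∀ ℓ a, u ℓ a ∈ Set.Icc (0 : ℝ) 1)
    (v : Fin n → Fin L → Fin A → Fin K → ℝ)
    (hv : ∀ i ℓ a k, v i ℓ a k ∈ Set.Icc (0 : ℝ) 1)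
    (br : (Fin n → Fin K) → (Fin L → ℝ) → (Fin n → Fin A)) (hbr : IsBR u v br)
    (hTW : ({W : Fin n → Fin K → Fin A | (BRregion br W).Nonempty}.ncard : ℕ) ≤ T) :
    1 - 1 / (T : ℝ) ^ 2 ≤
      ∑ ω : (Fin n → Fin K → Fin A) → Fin T → (Fin n → Fin A),
        if (∀ W : Fin n → Fin K → Fin A, (BRregion br W).Nonempty →
              ∀ N : ℕ, 1 ≤ N → N ≤ T → ∀ x ∈ BRregion br W,
                |UReg D u W x -
                    (1 / (N : ℝ)) *
                      ∑ s : Fin T, (if (s : ℕ) < N then leaderU u x (ω W s) else 0)| ≤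
                  Real.sqrt (4 * ((L : ℝ) + 1) * Real.log (3 * (T : ℝ)) / (N : ℝ)))
        then ∏ W : Fin n → Fin K → Fin A, ∏ s : Fin T, Pact D W (ω W s)
        else 0 := by
  classical
  have hq0 : ∀ (W : Fin n → Fin K → Fin A) a, 0 ≤ Pact D W a := fun W a => Pact_nonneg D hD W a
  have hq1 : ∀ W : Fin n → Fin K → Fin A, ∑ a, Pact D W a = 1 := fun W => Pact_sum D hD W
  have hT1 : (1 : ℝ) ≤ (T : ℝ) := by exact_mod_cast hT
  have hlog : 0 < Real.log (3 * (T : ℝ)) := Real.log_pos (by linarith)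
  have hp0 : ∀ ω : (Fin n → Fin K → Fin A) → Fin T → (Fin n → Fin A),
      0 ≤ ∏ W, ∏ s, Pact D W (ω W s) :=
    fun ω => Finset.prod_nonneg fun W _ => Finset.prod_nonneg fun s _ => hq0 W _
  have hptot : ∑ ω : (Fin n → Fin K → Fin A) → Fin T → (Fin n → Fin A),
      ∏ W, ∏ s, Pact D W (ω W s) = 1 := by
    rw [sum_fn_prod (fun (W : Fin n → Fin K → Fin A) (c : Fin T → (Fin n → Fin A)) =>
      ∏ s : Fin T, Pact D W (c s))]
    apply Finset.prod_eq_one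
    intro W _
    rw [sum_fn_prod (fun (_ : Fin T) (a : Fin n → Fin A) => Pact D W a)]
    exact Finset.prod_eq_one fun s _ => hq1 W
  suffices hbad : ∑ ω : (Fin n → Fin K → Fin A) → Fin T → (Fin n → Fin A),
      (if (∀ W : Fin n → Fin K → Fin A, (BRregion br W).Nonempty →
              ∀ N : ℕ, 1 ≤ N → N ≤ T → ∀ x ∈ BRregion br W,
                |UReg D u W x -
                    (1 / (N : ℝ)) *
                      ∑ s : Fin T, (if (s : ℕ) < N then leaderU u x (ω W s) else 0)| ≤
                  Real.sqrt (4 * ((L : ℝ) + 1) * Real.log (3 * (T : ℝ)) / (N : ℝ)))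
        then 0 else ∏ W : Fin n → Fin K → Fin A, ∏ s : Fin T, Pact D W (ω W s))
        ≤ 1 / (T : ℝ) ^ 2 by
    have hsplit : (∑ ω : (Fin n → Fin K → Fin A) → Fin T → (Fin n → Fin A),
        (if (∀ W : Fin n → Fin K → Fin A, (BRregion br W).Nonempty →
              ∀ N : ℕ, 1 ≤ N → N ≤ T → ∀ x ∈ BRregion br W,
                |UReg D u W x -
                    (1 / (N : ℝ)) *
                      ∑ s : Fin T, (if (s : ℕ) < N then leaderU u x (ω W s) else 0)| ≤
                  Real.sqrt (4 * ((L : ℝ) + 1) * Real.log (3 * (T : ℝ)) / (N : ℝ)))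
        then ∏ W : Fin n → Fin K → Fin A, ∏ s : Fin T, Pact D W (ω W s) else 0))
      + (∑ ω : (Fin n → Fin K → Fin A) → Fin T → (Fin n → Fin A),
        (if (∀ W : Fin n → Fin K → Fin A, (BRregion br W).Nonempty →
              ∀ N : ℕ, 1 ≤ N → N ≤ T → ∀ x ∈ BRregion br W,
                |UReg D u W x -
                    (1 / (N : ℝ)) *
                      ∑ s : Fin T, (if (s : ℕ) < N then leaderU u x (ω W s) else 0)| ≤
                  Real.sqrt (4 * ((L : ℝ) + 1) * Real.log (3 * (T : ℝ)) / (N : ℝ)))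
        then 0 else ∏ W : Fin n → Fin K → Fin A, ∏ s : Fin T, Pact D W (ω W s))) = 1 := by
      rw [← Finset.sum_add_distrib, ← hptot]
      exact Finset.sum_congr rfl fun ω _ => by split_ifs <;> ring
    linarith
  set S : Finset (Fin n → Fin K → Fin A) :=
    univ.filter (fun W => (BRregion br W).Nonempty) with hSdef
  have hScard : S.card ≤ T := by
    have hcard : {W : Fin n → Fin K → Fin A | (BRregion br W).Nonempty}.ncard = S.card := by
      rw [hSdef, Set.ncard_eq_toFinset_card', Set.toFinset_setOf]
    omega
  have hpoint : ∀ ω : (Fin n → Fin K → Fin A) → Fin T → (Fin n → Fin A),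
      (if (∀ W : Fin n → Fin K → Fin A, (BRregion br W).Nonempty →
              ∀ N : ℕ, 1 ≤ N → N ≤ T → ∀ x ∈ BRregion br W,
                |UReg D u W x -
                    (1 / (N : ℝ)) *
                      ∑ s : Fin T, (if (s : ℕ) < N then leaderU u x (ω W s) else 0)| ≤
                  Real.sqrt (4 * ((L : ℝ) + 1) * Real.log (3 * (T : ℝ)) / (N : ℝ)))
        then 0 else ∏ W : Fin n → Fin K → Fin A, ∏ s : Fin T, Pact D W (ω W s))
      ≤ ∑ W ∈ S, ∑ N ∈ Finset.Icc 1 T, ∑ ℓ : Fin L,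
          (if (N : ℝ) * Real.sqrt (4 * ((L : ℝ) + 1) * Real.log (3 * (T : ℝ)) / (N : ℝ)) <
              |∑ s : Fin T,
                (if (s : ℕ) < N then u ℓ (ω W s) - ∑ b, Pact D W b * u ℓ b else 0)|
            then ∏ W' : Fin n → Fin K → Fin A, ∏ s : Fin T, Pact D W' (ω W' s) else 0) := by
    intro ω
    have hterm_nonneg : ∀ (W : Fin n → Fin K → Fin A) (N : ℕ) (ℓ : Fin L),
        (0:ℝ) ≤ (if (N : ℝ) * Real.sqrt (4 * ((L : ℝ) + 1) * Real.log (3 * (T : ℝ)) / (N : ℝ)) <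
              |∑ s : Fin T,
                (if (s : ℕ) < N then u ℓ (ω W s) - ∑ b, Pact D W b * u ℓ b else 0)|
            then ∏ W' : Fin n → Fin K → Fin A, ∏ s : Fin T, Pact D W' (ω W' s) else 0) := by
      intro W N ℓ
      split_ifs
      · exact hp0 ω
      · exact le_refl 0
    by_cases hE : (∀ W : Fin n → Fin K → Fin A, (BRregion br W).Nonempty →
              ∀ N : ℕ, 1 ≤ N → N ≤ T → ∀ x ∈ BRregion br W,
                |UReg D u W x -
                    (1 / (N : ℝ)) *
                      ∑ s : Fin T, (if (s : ℕ) < N then leaderU u x (ω W s) else 0)| ≤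
                  Real.sqrt (4 * ((L : ℝ) + 1) * Real.log (3 * (T : ℝ)) / (N : ℝ)))
    · rw [if_pos hE]
      exact Finset.sum_nonneg fun W _ => Finset.sum_nonneg fun N _ =>
        Finset.sum_nonneg fun ℓ _ => hterm_nonneg W N ℓ
    · rw [if_neg hE]
      push_neg at hE
      obtain ⟨W, hWne, N, hN1, hNT, x, hx, hgt⟩ := hE
      obtain ⟨⟨hx0, hx1⟩, -⟩ := hx
      obtain ⟨ℓ, hl⟩ := key_extract D u W (ω W) N hN1 hNT x hx0 hx1 _ hgt
      calc ∏ W' : Fin n → Fin K → Fin A, ∏ s : Fin T, Pact D W' (ω W' s)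
          = (if (N : ℝ) * Real.sqrt (4 * ((L : ℝ) + 1) * Real.log (3 * (T : ℝ)) / (N : ℝ)) <
              |∑ s : Fin T,
                (if (s : ℕ) < N then u ℓ (ω W s) - ∑ b, Pact D W b * u ℓ b else 0)|
            then ∏ W' : Fin n → Fin K → Fin A, ∏ s : Fin T, Pact D W' (ω W' s) else 0) :=
            (if_pos hl).symm
        _ ≤ ∑ ℓ' : Fin L,
            (if (N : ℝ) * Real.sqrt (4 * ((L : ℝ) + 1) * Real.log (3 * (T : ℝ)) / (N : ℝ)) <
              |∑ s : Fin T,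
                (if (s : ℕ) < N then u ℓ' (ω W s) - ∑ b, Pact D W b * u ℓ' b else 0)|
            then ∏ W' : Fin n → Fin K → Fin A, ∏ s : Fin T, Pact D W' (ω W' s) else 0) :=
            Finset.single_le_sum (fun ℓ' _ => hterm_nonneg W N ℓ') (Finset.mem_univ ℓ)
        _ ≤ ∑ N' ∈ Finset.Icc 1 T, ∑ ℓ' : Fin L,
            (if (N' : ℝ) * Real.sqrt (4 * ((L : ℝ) + 1) * Real.log (3 * (T : ℝ)) / (N' : ℝ)) <
              |∑ s : Fin T,
                (if (s : ℕ) < N' then u ℓ' (ω W s) - ∑ b, Pact D W b * u ℓ' b else 0)|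
            then ∏ W' : Fin n → Fin K → Fin A, ∏ s : Fin T, Pact D W' (ω W' s) else 0) :=
            Finset.single_le_sum
              (fun N' _ => Finset.sum_nonneg fun ℓ' _ => hterm_nonneg W N' ℓ')
              (Finset.mem_Icc.mpr ⟨hN1, hNT⟩)
        _ ≤ ∑ W'' ∈ S, ∑ N' ∈ Finset.Icc 1 T, ∑ ℓ' : Fin L,
            (if (N' : ℝ) * Real.sqrt (4 * ((L : ℝ) + 1) * Real.log (3 * (T : ℝ)) / (N' : ℝ)) <
              |∑ s : Fin T,
                (if (s : ℕ) < N' then u ℓ' (ω W'' s) - ∑ b, Pact D W'' b * u ℓ' b else 0)|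
            then ∏ W' : Fin n → Fin K → Fin A, ∏ s : Fin T, Pact D W' (ω W' s) else 0) :=
            Finset.single_le_sum
              (fun W'' _ => Finset.sum_nonneg fun N' _ =>
                Finset.sum_nonneg fun ℓ' _ => hterm_nonneg W'' N' ℓ')
              (by rw [hSdef]; exact Finset.mem_filter.mpr ⟨Finset.mem_univ _, hWne⟩)
  have hterm : ∀ W ∈ S, ∀ N ∈ Finset.Icc 1 T, ∀ ℓ : Fin L,
      (∑ ω : (Fin n → Fin K → Fin A) → Fin T → (Fin n → Fin A),
        (if (N : ℝ) * Real.sqrt (4 * ((L : ℝ) + 1) * Real.log (3 * (T : ℝ)) / (N : ℝ)) <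
              |∑ s : Fin T,
                (if (s : ℕ) < N then u ℓ (ω W s) - ∑ b, Pact D W b * u ℓ b else 0)|
            then ∏ W' : Fin n → Fin K → Fin A, ∏ s : Fin T, Pact D W' (ω W' s) else 0))
        ≤ 2 * Real.exp (-(2 * ((L : ℝ) + 1) * Real.log (3 * (T : ℝ)))) := by
    intro W _ N hN ℓ
    obtain ⟨hN1, hNT⟩ := Finset.mem_Icc.mp hN
    have hNpos : (0 : ℝ) < N := by exact_mod_cast hN1
    have harg : 0 ≤ 4 * ((L : ℝ) + 1) * Real.log (3 * (T : ℝ)) / (N : ℝ) := by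
      apply div_nonneg _ (le_of_lt hNpos)
      exact mul_nonneg (by positivity) hlog.le
    have hε2 : (N : ℝ) *
        (Real.sqrt (4 * ((L : ℝ) + 1) * Real.log (3 * (T : ℝ)) / (N : ℝ))) ^ 2 / 2
        = 2 * ((L : ℝ) + 1) * Real.log (3 * (T : ℝ)) := by
      rw [Real.sq_sqrt harg]
      field_simp
      ring
    calc ∑ ω : (Fin n → Fin K → Fin A) → Fin T → (Fin n → Fin A),
        (if (N : ℝ) * Real.sqrt (4 * ((L : ℝ) + 1) * Real.log (3 * (T : ℝ)) / (N : ℝ)) <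
              |∑ s : Fin T,
                (if (s : ℕ) < N then u ℓ (ω W s) - ∑ b, Pact D W b * u ℓ b else 0)|
            then ∏ W' : Fin n → Fin K → Fin A, ∏ s : Fin T, Pact D W' (ω W' s) else 0)
        = ∑ ω : (Fin n → Fin K → Fin A) → Fin T → (Fin n → Fin A),
          (∏ W' : Fin n → Fin K → Fin A, ∏ s : Fin T, Pact D W' (ω W' s)) *
          (if (N : ℝ) * Real.sqrt (4 * ((L : ℝ) + 1) * Real.log (3 * (T : ℝ)) / (N : ℝ)) <
              |∑ s : Fin T,
                (if (s : ℕ) < N then u ℓ ((ω W) s) - ∑ b, Pact D W b * u ℓ b else 0)|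
            then (1:ℝ) else 0) :=
          Finset.sum_congr rfl fun ω _ => by split_ifs <;> ring
      _ = ∑ c : Fin T → (Fin n → Fin A), (∏ s : Fin T, Pact D W (c s)) *
          (if (N : ℝ) * Real.sqrt (4 * ((L : ℝ) + 1) * Real.log (3 * (T : ℝ)) / (N : ℝ)) <
              |∑ s : Fin T,
                (if (s : ℕ) < N then u ℓ (c s) - ∑ b, Pact D W b * u ℓ b else 0)|
            then (1:ℝ) else 0) :=
          marginal (Pact D) hq1 W
            (fun c => if (N : ℝ) * Real.sqrt (4 * ((L : ℝ) + 1) *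
                Real.log (3 * (T : ℝ)) / (N : ℝ)) <
              |∑ s : Fin T,
                (if (s : ℕ) < N then u ℓ (c s) - ∑ b, Pact D W b * u ℓ b else 0)|
            then (1:ℝ) else 0)
      _ ≤ 2 * Real.exp (-((N : ℝ) *
            (Real.sqrt (4 * ((L : ℝ) + 1) * Real.log (3 * (T : ℝ)) / (N : ℝ))) ^ 2 / 2)) :=
          chernoff_abs T N hNT (Pact D W) (hq0 W) (hq1 W) (u ℓ) (hu ℓ) _ (Real.sqrt_nonneg _)
      _ = 2 * Real.exp (-(2 * ((L : ℝ) + 1) * Real.log (3 * (T : ℝ)))) := by rw [hε2]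
  calc ∑ ω : (Fin n → Fin K → Fin A) → Fin T → (Fin n → Fin A),
      (if (∀ W : Fin n → Fin K → Fin A, (BRregion br W).Nonempty →
              ∀ N : ℕ, 1 ≤ N → N ≤ T → ∀ x ∈ BRregion br W,
                |UReg D u W x -
                    (1 / (N : ℝ)) *
                      ∑ s : Fin T, (if (s : ℕ) < N then leaderU u x (ω W s) else 0)| ≤
                  Real.sqrt (4 * ((L : ℝ) + 1) * Real.log (3 * (T : ℝ)) / (N : ℝ)))
        then 0 else ∏ W : Fin n → Fin K → Fin A, ∏ s : Fin T, Pact D W (ω W s))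
      ≤ ∑ ω : (Fin n → Fin K → Fin A) → Fin T → (Fin n → Fin A),
        ∑ W ∈ S, ∑ N ∈ Finset.Icc 1 T, ∑ ℓ : Fin L,
          (if (N : ℝ) * Real.sqrt (4 * ((L : ℝ) + 1) * Real.log (3 * (T : ℝ)) / (N : ℝ)) <
              |∑ s : Fin T,
                (if (s : ℕ) < N then u ℓ (ω W s) - ∑ b, Pact D W b * u ℓ b else 0)|
            then ∏ W' : Fin n → Fin K → Fin A, ∏ s : Fin T, Pact D W' (ω W' s) else 0) :=
        Finset.sum_le_sum fun ω _ => hpoint ω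
    _ = ∑ W ∈ S, ∑ N ∈ Finset.Icc 1 T, ∑ ℓ : Fin L,
        ∑ ω : (Fin n → Fin K → Fin A) → Fin T → (Fin n → Fin A),
          (if (N : ℝ) * Real.sqrt (4 * ((L : ℝ) + 1) * Real.log (3 * (T : ℝ)) / (N : ℝ)) <
              |∑ s : Fin T,
                (if (s : ℕ) < N then u ℓ (ω W s) - ∑ b, Pact D W b * u ℓ b else 0)|
            then ∏ W' : Fin n → Fin K → Fin A, ∏ s : Fin T, Pact D W' (ω W' s) else 0) := by
        rw [Finset.sum_comm]
        refine Finset.sum_congr rfl fun W _ => ?_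
        rw [Finset.sum_comm]
        refine Finset.sum_congr rfl fun N _ => ?_
        rw [Finset.sum_comm]
    _ ≤ ∑ W ∈ S, ∑ N ∈ Finset.Icc 1 T, ∑ ℓ : Fin L,
        2 * Real.exp (-(2 * ((L : ℝ) + 1) * Real.log (3 * (T : ℝ)))) :=
        Finset.sum_le_sum fun W hW => Finset.sum_le_sum fun N hN =>
          Finset.sum_le_sum fun ℓ _ => hterm W hW N hN ℓ
    _ = (S.card : ℝ) * ((T : ℝ) * ((L : ℝ) *
          (2 * Real.exp (-(2 * ((L : ℝ) + 1) * Real.log (3 * (T : ℝ))))))) := by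
        simp only [Finset.sum_const, Finset.card_univ, Fintype.card_fin, Nat.card_Icc,
          nsmul_eq_mul]
        push_cast [Nat.add_sub_cancel]
        ring
    _ ≤ (T : ℝ) * ((T : ℝ) * ((L : ℝ) *
          (2 * Real.exp (-(2 * ((L : ℝ) + 1) * Real.log (3 * (T : ℝ))))))) := by
        apply mul_le_mul_of_nonneg_right _ (by positivity)
        exact_mod_cast hScard
    _ ≤ 1 / (T : ℝ) ^ 2 := numeric L T hL hT
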